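/- No ordered local pressure-related dynamic converges to equilibrium: for every OLP mapping Y fixing Q̂ and every ε > 0, there exists Q₀ ∈ 𝒬 with 0 < d(Q₀, Q̂) ≤ ε such that the sequence Q_{k+1} = Y(Q_k) satisfies d(Q_k, Q̂) ≥ d(Q₀, Q̂) > 0 for all k, hence does not converge to Q̂. -/

import Mathlib

/-- A function is piecewise continuously differentiable on [a,b] if [a,b] can be
partitioned into finitely many subintervals, on the interior of each of which the
function is differentiable with continuous derivative. -/
def PiecewiseC1On (f : ℝ → ℝ) (a b : ℝ) : Prop :=
  ∃ (k : ℕ) (p : ℕ → ℝ), 0 < k ∧ p 0 = a ∧ p k = b ∧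
    (∀ i < k, p i < p (i + 1)) ∧
    ∀ i < k, (∀ t ∈ Set.Ioo (p i) (p (i + 1)), DifferentiableAt ℝ f t) ∧
      ContinuousOn (deriv f) (Set.Ioo (p i) (p (i + 1)))

/-- The class 𝒬 of admissible queueing delay profiles on [τₛ, τₑ]. -/
def QSpace (τs τe : ℝ) : Set (ℝ → ℝ) :=
  {Q | ContinuousOn Q (Set.Icc τs τe) ∧ PiecewiseC1On Q τs τe ∧
    Q τs = 0 ∧ Q τe = 0 ∧ (∀ t ∈ Set.Ioo τs τe, 0 < Q t) ∧
    ∀ t₁ ∈ Set.Icc τs τe, ∀ t₂ ∈ Set.Icc τs τe, t₁ < t₂ → Q t₂ - Q t₁ < t₂ - t₁}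

/-- Sup-norm distance between two queueing profiles on [τₛ, τₑ]. -/
noncomputable def supDist (τs τe : ℝ) (Q₁ Q₂ : ℝ → ℝ) : ℝ :=
  sSup ((fun t => |Q₁ t - Q₂ t|) '' Set.Icc τs τe)

/-- Derivative of the cost profile of the traveler n(t) = N₁ + t·s arriving at t,
given queueing profile Q: C'_{n(t)}(t | Q). -/
noncomputable def costDeriv (β γ : ℝ → ℝ) (N₁ s : ℝ) (Q : ℝ → ℝ) (t : ℝ) : ℝ :=
  if t < 0 then deriv Q t - β (N₁ + t * s) else deriv Q t + γ (N₁ + t * s)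

/-- Ordered local pressure-related (OLP) dynamics: the mapping preserves 𝒬, and
wherever Q is differentiable the change in queue has the sign of the local cost
derivative. -/
def IsOLP (τs τe : ℝ) (β γ : ℝ → ℝ) (N₁ s : ℝ) (Y : (ℝ → ℝ) → (ℝ → ℝ)) : Prop :=
  (∀ Q ∈ QSpace τs τe, Y Q ∈ QSpace τs τe) ∧
  ∀ Q ∈ QSpace τs τe, ∀ t ∈ Set.Ioo τs τe, t ≠ 0 → DifferentiableAt ℝ Q t →
    0 ≤ (Y Q t - Q t) * costDeriv β γ N₁ s Q t

lemma mem_partition_aux : ∀ (k : ℕ) (p : ℕ → ℝ) (c : ℝ),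
    (∀ i < k, p i < p (i + 1)) → p 0 < c → c < p k → (∀ i ≤ k, c ≠ p i) →
    ∃ i < k, c ∈ Set.Ioo (p i) (p (i + 1)) := by
  intro k
  induction k with
  | zero => intro p c _ h1 h2 _; exact absurd (h1.trans h2) (lt_irrefl _)
  | succ n ih =>
    intro p c hmono h1 h2 hne
    by_cases hc : c < p n
    · obtain ⟨i, hi, hmem⟩ := ih p c (fun i hi => hmono i (hi.trans (Nat.lt_succ_self n)))
        h1 hc (fun i hi => hne i (hi.trans (Nat.le_succ n)))
      exact ⟨i, hi.trans (Nat.lt_succ_self n), hmem⟩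
    · push_neg at hc
      refine ⟨n, Nat.lt_succ_self n, lt_of_le_of_ne hc (Ne.symm (hne n (Nat.le_succ n))), h2⟩

lemma le_of_deriv_nonpos_finite_except (f : ℝ → ℝ) (S : Finset ℝ) :
    ∀ u v : ℝ, u < v → ContinuousOn f (Set.Icc u v) →
    (∀ c ∈ Set.Ioo u v, c ∉ S → DifferentiableAt ℝ f c) →
    (∀ c ∈ Set.Ioo u v, c ∉ S → deriv f c ≤ 0) → f v ≤ f u := by
  induction S using Finset.strongInduction with
  | _ S ih =>
    intro u v huv hcont hdiff hder
    by_cases hS : ∃ w ∈ S, w ∈ Set.Ioo u v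
    · obtain ⟨w, hwS, hw⟩ := hS
      have hsub1 : Set.Icc u w ⊆ Set.Icc u v := Set.Icc_subset_Icc le_rfl hw.2.le
      have hsub2 : Set.Icc w v ⊆ Set.Icc u v := Set.Icc_subset_Icc hw.1.le le_rfl
      have hmem : ∀ c : ℝ, c ∉ S.erase w → c ≠ w → c ∉ S := by
        intro c hc hcw hcS
        exact hc (Finset.mem_erase.mpr ⟨hcw, hcS⟩)
      have h1 : f w ≤ f u := by
        refine ih (S.erase w) (Finset.erase_ssubset hwS) u w hw.1 (hcont.mono hsub1) ?_ ?_
        · intro c hc hcS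
          exact hdiff c ⟨hc.1, hc.2.trans hw.2⟩ (hmem c hcS (ne_of_lt hc.2))
        · intro c hc hcS
          exact hder c ⟨hc.1, hc.2.trans hw.2⟩ (hmem c hcS (ne_of_lt hc.2))
      have h2 : f v ≤ f w := by
        refine ih (S.erase w) (Finset.erase_ssubset hwS) w v hw.2 (hcont.mono hsub2) ?_ ?_
        · intro c hc hcS
          exact hdiff c ⟨hw.1.trans hc.1, hc.2⟩ (hmem c hcS (ne_of_gt hc.1))
        · intro c hc hcS
          exact hder c ⟨hw.1.trans hc.1, hc.2⟩ (hmem c hcS (ne_of_gt hc.1))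
      exact h2.trans h1
    · push_neg at hS
      have hA : AntitoneOn f (Set.Icc u v) := by
        apply antitoneOn_of_deriv_nonpos (convex_Icc u v) hcont
        · intro x hx
          rw [interior_Icc] at hx
          exact (hdiff x hx (fun h => hS x h hx)).differentiableWithinAt
        · intro x hx
          rw [interior_Icc] at hx
          exact hder x hx (fun h => hS x h hx)
      exact hA (Set.left_mem_Icc.mpr huv.le) (Set.right_mem_Icc.mpr huv.le) huv.le

/-- Core lemma: an OLP step never decreases the sup-distance to the equilibrium. -/
lemma olp_step (τs τe : ℝ) (hτs : τs < 0) (hτe : 0 < τe)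
    (β γ : ℝ → ℝ) (N₁ s : ℝ)
    (Qhat : ℝ → ℝ) (hQhat : Qhat ∈ QSpace τs τe)
    (hQhat1 : ∀ t ∈ Set.Ioo τs 0, HasDerivAt Qhat (β (N₁ + t * s)) t)
    (hQhat2 : ∀ t ∈ Set.Ioo 0 τe, HasDerivAt Qhat (-γ (N₁ + t * s)) t)
    (Y : (ℝ → ℝ) → (ℝ → ℝ)) (hY : IsOLP τs τe β γ N₁ s Y)
    (Q : ℝ → ℝ) (hQ : Q ∈ QSpace τs τe) :
    supDist τs τe Q Qhat ≤ supDist τs τe (Y Q) Qhat := by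
  obtain ⟨hQc, hQpc1, hQτs, hQτe, hQpos, hQlip⟩ := hQ
  have hQmem : Q ∈ QSpace τs τe := ⟨hQc, hQpc1, hQτs, hQτe, hQpos, hQlip⟩
  obtain ⟨hHc, hHpc1, hHτs, hHτe, hHpos, hHlip⟩ := hQhat
  have hYQ := hY.1 Q hQmem
  have hYQc : ContinuousOn (Y Q) (Set.Icc τs τe) := hYQ.1
  have hτse : τs < τe := hτs.trans hτe
  have hScpt : IsCompact (Set.Icc τs τe) := isCompact_Icc
  have hSne : (Set.Icc τs τe).Nonempty := Set.nonempty_Icc.mpr hτse.le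
  set g : ℝ → ℝ := fun t => |Q t - Qhat t| with hgdef
  set g' : ℝ → ℝ := fun t => |Y Q t - Qhat t| with hg'def
  have hgc : ContinuousOn g (Set.Icc τs τe) := (hQc.sub hHc).abs
  have hg'c : ContinuousOn g' (Set.Icc τs τe) := (hYQc.sub hHc).abs
  have himgcpt : IsCompact (g '' Set.Icc τs τe) := hScpt.image_of_continuousOn hgc
  have himg'cpt : IsCompact (g' '' Set.Icc τs τe) := hScpt.image_of_continuousOn hg'c
  have hbdd : BddAbove (g '' Set.Icc τs τe) := himgcpt.bddAbove
  have hbdd' : BddAbove (g' '' Set.Icc τs τe) := himg'cpt.bddAbove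
  set M := sSup (g '' Set.Icc τs τe) with hMdef
  -- M is attained
  obtain ⟨tstar, htstarS, htstar⟩ := himgcpt.sSup_mem ⟨g τs, ⟨τs, Set.left_mem_Icc.mpr hτse.le, rfl⟩⟩
  -- sup' is nonneg
  have hsup'nonneg : 0 ≤ sSup (g' '' Set.Icc τs τe) :=
    le_trans (abs_nonneg _) (le_csSup hbdd' ⟨τs, Set.left_mem_Icc.mpr hτse.le, rfl⟩)
  have hM0 : 0 ≤ M := le_trans (abs_nonneg _) (le_csSup hbdd ⟨τs, Set.left_mem_Icc.mpr hτse.le, rfl⟩)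
  -- key claim
  have key : ∀ ε : ℝ, 0 < ε → ε < M → ∃ c ∈ Set.Icc τs τe, M - ε ≤ g' c := by
    intro ε hε hεM
    have hMpos : 0 < M := hε.trans hεM
    -- sign
    obtain ⟨σ, hσ, hfstar⟩ : ∃ σ : ℝ, (σ = 1 ∨ σ = -1) ∧ σ * (Q tstar - Qhat tstar) = M := by
      rcases abs_cases (Q tstar - Qhat tstar) with ⟨h, _⟩ | ⟨h, _⟩
      · exact ⟨1, Or.inl rfl, by rw [one_mul, ← h]; exact htstar⟩
      · exact ⟨-1, Or.inr rfl, by rw [neg_one_mul, ← h]; exact htstar⟩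
    set f : ℝ → ℝ := fun t => σ * (Q t - Qhat t) with hfdef
    have hfc : ContinuousOn f (Set.Icc τs τe) := ((hQc.sub hHc).const_smul σ : )
    have hfτs : f τs = 0 := by simp [hfdef, hQτs, hHτs]
    have hftstar : f tstar = M := hfstar
    have htstargt : τs < tstar := by
      rcases lt_or_eq_of_le htstarS.1 with h | h
      · exact h
      · exfalso; rw [← h, hfτs] at hftstar; linarith
    -- the set A and its sup
    set A : Set ℝ := Set.Icc τs tstar ∩ f ⁻¹' (Set.Iic (M - ε)) with hAdef
    have hAne : A.Nonempty := ⟨τs, Set.left_mem_Icc.mpr htstargt.le, by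
      simp only [Set.mem_preimage, Set.mem_Iic, hfτs]; linarith⟩
    have hAclosed : IsClosed A :=
      (hfc.mono (Set.Icc_subset_Icc le_rfl (htstarS.2))).preimage_isClosed_of_isClosed
        isClosed_Icc isClosed_Iic
    have hAbdd : BddAbove A := ⟨tstar, fun x hx => hx.1.2⟩
    set a := sSup A with hadef
    have haA : a ∈ A := hAclosed.csSup_mem hAne hAbdd
    have hafle : f a ≤ M - ε := haA.2
    have haIcc : a ∈ Set.Icc τs tstar := haA.1
    have halt : a < tstar := by
      rcases lt_or_eq_of_le haIcc.2 with h | h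
      · exact h
      · exfalso; rw [h, hftstar] at hafle; linarith
    have hgt : ∀ t, a < t → t ≤ tstar → M - ε < f t := by
      intro t hat hts
      by_contra hle
      push_neg at hle
      have : t ∈ A := ⟨⟨haIcc.1.trans hat.le, hts⟩, hle⟩
      exact absurd (le_csSup hAbdd this) (not_le.mpr hat)
    -- bad set
    obtain ⟨k, p, hk, hp0, hpk, hpmono, hpprops⟩ := hQpc1
    set Sbad : Finset ℝ := (Finset.range (k+1)).image p ∪ {0} with hSbaddef
    -- sub-interval of the whole interval
    have hsubIcc : Set.Icc a tstar ⊆ Set.Icc τs τe :=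
      Set.Icc_subset_Icc haIcc.1 htstarS.2
    have hsubIoo : Set.Ioo a tstar ⊆ Set.Ioo τs τe := fun x hx =>
      ⟨lt_of_le_of_lt haIcc.1 hx.1, lt_of_lt_of_le hx.2 htstarS.2⟩
    -- facts about valid points
    have hvalid : ∀ c ∈ Set.Ioo a tstar, c ∉ Sbad →
        DifferentiableAt ℝ Q c ∧ DifferentiableAt ℝ f c ∧
        deriv f c = σ * costDeriv β γ N₁ s Q c := by
      intro c hc hcS
      have hcIoo : c ∈ Set.Ioo τs τe := hsubIoo hc
      have hc0 : c ≠ 0 := by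
        intro h
        exact hcS (by simp [hSbaddef, h])
      have hcp : ∀ i ≤ k, c ≠ p i := by
        intro i hi h
        exact hcS (Finset.mem_union_left _ (Finset.mem_image.mpr
          ⟨i, Finset.mem_range.mpr (Nat.lt_succ_of_le hi), h.symm⟩))
      obtain ⟨i, hik, hci⟩ := mem_partition_aux k p c hpmono (hp0 ▸ hcIoo.1) (hpk ▸ hcIoo.2) hcp
      have hQdiff : DifferentiableAt ℝ Q c := (hpprops i hik).1 c hci
      have hHder : HasDerivAt Qhat (if c < 0 then β (N₁ + c * s) else -γ (N₁ + c * s)) c := by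
        rcases lt_or_gt_of_ne hc0 with h | h
        · simpa [h] using hQhat1 c ⟨hcIoo.1, h⟩
        · simpa [not_lt.mpr h.le] using hQhat2 c ⟨h, hcIoo.2⟩
      have hHdiff : DifferentiableAt ℝ Qhat c := hHder.differentiableAt
      have hfdiff : DifferentiableAt ℝ f c := ((hQdiff.sub hHdiff).const_mul σ)
      refine ⟨hQdiff, hfdiff, ?_⟩
      have hderf : deriv f c = σ * (deriv Q c - deriv Qhat c) := by
        rw [hfdef]
        rw [deriv_const_mul σ (hQdiff.fun_sub hHdiff), deriv_fun_sub hQdiff hHdiff]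
      rw [hderf, hHder.deriv, costDeriv]
      rcases lt_or_gt_of_ne hc0 with h | h
      · simp only [if_pos h]
      · simp only [if_neg (not_lt.mpr h.le)]
        ring
    -- main contradiction argument
    by_contra hcon
    push_neg at hcon
    have hder : ∀ c ∈ Set.Ioo a tstar, c ∉ Sbad → deriv f c ≤ 0 := by
      intro c hc hcS
      by_contra hpos
      push_neg at hpos
      obtain ⟨hQdiff, hfdiff, hderf⟩ := hvalid c hc hcS
      have hcIoo : c ∈ Set.Ioo τs τe := hsubIoo hc
      have hc0 : c ≠ 0 := by
        intro h; exact hcS (by simp [hSbaddef, h])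
      have hOLP := hY.2 Q hQmem c hcIoo hc0 hQdiff
      -- σ * (Y Q c - Q c) ≥ 0
      have hσCD : 0 < σ * costDeriv β γ N₁ s Q c := hderf ▸ hpos
      have hσsq : σ * σ = 1 := by rcases hσ with h | h <;> rw [h] <;> norm_num
      have h1 : 0 ≤ ((Y Q c - Q c) * σ) * (σ * costDeriv β γ N₁ s Q c) := by
        calc (0:ℝ) ≤ (Y Q c - Q c) * costDeriv β γ N₁ s Q c := hOLP
        _ = ((Y Q c - Q c) * σ) * (σ * costDeriv β γ N₁ s Q c) := by
            rw [mul_assoc, ← mul_assoc σ, hσsq, one_mul]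
      have h2 : 0 ≤ (Y Q c - Q c) * σ := (mul_nonneg_iff_of_pos_right hσCD).mp h1
      have h3 : M - ε < f c := hgt c hc.1 hc.2.le
      have h4 : M - ε ≤ σ * (Y Q c - Qhat c) := by
        have : σ * (Y Q c - Qhat c) = (Y Q c - Q c) * σ + f c := by rw [hfdef]; ring
        rw [this]; linarith
      have h5 : M - ε ≤ g' c := by
        refine h4.trans ?_
        rcases hσ with h | h
        · rw [h, one_mul]; exact le_abs_self _
        · rw [h, neg_one_mul]; exact neg_le_abs _
      exact absurd h5 (not_le.mpr (hcon c (hsubIcc ⟨hc.1.le, hc.2.le⟩)))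
    have hdiff : ∀ c ∈ Set.Ioo a tstar, c ∉ Sbad → DifferentiableAt ℝ f c :=
      fun c hc hcS => (hvalid c hc hcS).2.1
    have := le_of_deriv_nonpos_finite_except f Sbad a tstar halt (hfc.mono hsubIcc) hdiff hder
    rw [hftstar] at this
    linarith
  -- conclude
  by_contra hlt
  push_neg at hlt
  set M' := sSup (g' '' Set.Icc τs τe) with hM'def
  have hM'M : M' < M := hlt
  set ε := (M - M') / 2 with hεdef
  have hε : 0 < ε := by simp [hεdef]; linarith
  have hεM : ε < M := by
    have : 0 ≤ M' := hsup'nonneg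
    simp [hεdef]; linarith
  obtain ⟨c, hcS, hc⟩ := key ε hε hεM
  have : g' c ≤ M' := le_csSup hbdd' ⟨c, hcS, rfl⟩
  have : M - ε ≤ M' := hc.trans this
  simp [hεdef] at this
  linarith

/-- No OLP dynamic converges to equilibrium: for every OLP mapping Y
fixing Q̂ and every ε > 0 there is a profile Q₀ ∈ 𝒬 with 0 < d(Q₀,Q̂) ≤ ε whose
iterates never get closer to Q̂ than Q₀. -/
theorem olp_instability
    (N N₁ s τs τe : ℝ) (hs : 0 < s) (hN : 0 < N)
    (hτs : τs < 0) (hτe : 0 < τe) (hN₁ : N₁ = -s * τs) (hτeN : τe = τs + N / s)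
    (β γ : ℝ → ℝ)
    (hβc : ContinuousOn β (Set.Icc 0 N))
    (hβmono : StrictMonoOn β (Set.Icc 0 N))
    (hβmem : ∀ n ∈ Set.Icc (0:ℝ) N, β n ∈ Set.Ioo (0:ℝ) 1)
    (hγc : ContinuousOn γ (Set.Icc 0 N))
    (hγanti : StrictAntiOn γ (Set.Icc 0 N))
    (hγpos : ∀ n ∈ Set.Icc (0:ℝ) N, 0 < γ n)
    (Qhat : ℝ → ℝ) (hQhat : Qhat ∈ QSpace τs τe)
    (hQhat1 : ∀ t ∈ Set.Ioo τs 0, HasDerivAt Qhat (β (N₁ + t * s)) t)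
    (hQhat2 : ∀ t ∈ Set.Ioo 0 τe, HasDerivAt Qhat (-γ (N₁ + t * s)) t) :
    ∀ Y : (ℝ → ℝ) → (ℝ → ℝ), IsOLP τs τe β γ N₁ s Y → Y Qhat = Qhat →
    ∀ ε > 0, ∃ Q₀ ∈ QSpace τs τe,
      0 < supDist τs τe Q₀ Qhat ∧ supDist τs τe Q₀ Qhat ≤ ε ∧
      ∀ k : ℕ, supDist τs τe Q₀ Qhat ≤ supDist τs τe (Y^[k] Q₀) Qhat := by
  intro Y hY _ ε hε
  obtain ⟨hHc, hHpc1, hHτs, hHτe, hHpos, hHlip⟩ := hQhat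
  have hQhatmem : Qhat ∈ QSpace τs τe := ⟨hHc, hHpc1, hHτs, hHτe, hHpos, hHlip⟩
  have hτse : τs < τe := hτs.trans hτe
  have hlen : 0 < τe - τs := by linarith
  set δ := min (1/2 : ℝ) (ε / (τe - τs)) with hδdef
  have hδpos : 0 < δ := lt_min (by norm_num) (div_pos hε hlen)
  have hδhalf : δ ≤ 1/2 := min_le_left _ _
  have hδε : δ * (τe - τs) ≤ ε := by
    have h := min_le_right (1/2 : ℝ) (ε / (τe - τs))
    calc δ * (τe - τs) ≤ (ε / (τe - τs)) * (τe - τs) := by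
          exact mul_le_mul_of_nonneg_right h hlen.le
      _ = ε := by field_simp
  set c : ℝ := 1 - δ with hcdef
  have hc0 : 0 < c := by rw [hcdef]; linarith
  have hc1 : c < 1 := by rw [hcdef]; linarith
  set Q₀ : ℝ → ℝ := fun t => c * Qhat t with hQ₀def
  -- bounds on Qhat
  have hHnonneg : ∀ t ∈ Set.Icc τs τe, 0 ≤ Qhat t := by
    intro t ht
    rcases eq_or_lt_of_le ht.1 with h | h
    · rw [← h, hHτs]
    rcases eq_or_lt_of_le ht.2 with h2 | h2
    · rw [h2, hHτe]
    · exact (hHpos t ⟨h, h2⟩).le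
  have hHub : ∀ t ∈ Set.Icc τs τe, Qhat t ≤ τe - τs := by
    intro t ht
    rcases eq_or_lt_of_le ht.1 with h | h
    · rw [← h, hHτs]; linarith
    · have := hHlip τs (Set.left_mem_Icc.mpr hτse.le) t ht h
      rw [hHτs] at this
      have := ht.2
      linarith
  -- Q₀ is in QSpace
  have hQ₀mem : Q₀ ∈ QSpace τs τe := by
    refine ⟨hHc.const_smul c, ?_, by simp [hQ₀def, hHτs], by simp [hQ₀def, hHτe], ?_, ?_⟩
    · obtain ⟨k, p, hk, hp0, hpk, hpmono, hpprops⟩ := hHpc1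
      refine ⟨k, p, hk, hp0, hpk, hpmono, fun i hi => ?_⟩
      obtain ⟨hdiff, hcont⟩ := hpprops i hi
      refine ⟨fun t ht => (hdiff t ht).const_mul c, ?_⟩
      have heq : Set.EqOn (deriv Q₀) (fun t => c * deriv Qhat t)
          (Set.Ioo (p i) (p (i+1))) := by
        intro t ht
        exact deriv_const_mul c (hdiff t ht)
      exact ContinuousOn.congr (hcont.const_smul c) heq
    · intro t ht
      exact mul_pos hc0 (hHpos t ht)
    · intro t₁ ht₁ t₂ ht₂ hlt
      have h := hHlip t₁ ht₁ t₂ ht₂ hlt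
      have : Q₀ t₂ - Q₀ t₁ = c * (Qhat t₂ - Qhat t₁) := by rw [hQ₀def]; ring
      rw [this]
      rcases le_or_gt (Qhat t₂ - Qhat t₁) 0 with hx | hx
      · have : c * (Qhat t₂ - Qhat t₁) ≤ 0 := mul_nonpos_of_nonneg_of_nonpos hc0.le hx
        linarith
      · have : c * (Qhat t₂ - Qhat t₁) < 1 * (Qhat t₂ - Qhat t₁) :=
          mul_lt_mul_of_pos_right hc1 hx
        linarith
  -- the distance function
  have habs : ∀ t ∈ Set.Icc τs τe, |Q₀ t - Qhat t| = δ * Qhat t := by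
    intro t ht
    have : Q₀ t - Qhat t = -(δ * Qhat t) := by rw [hQ₀def, hcdef]; ring
    rw [this, abs_neg, abs_of_nonneg (mul_nonneg hδpos.le (hHnonneg t ht))]
  have hub : ∀ x ∈ (fun t => |Q₀ t - Qhat t|) '' Set.Icc τs τe, x ≤ ε := by
    rintro x ⟨t, ht, rfl⟩
    show |Q₀ t - Qhat t| ≤ ε
    rw [habs t ht]
    calc δ * Qhat t ≤ δ * (τe - τs) := mul_le_mul_of_nonneg_left (hHub t ht) hδpos.le
      _ ≤ ε := hδε
  have hbdd : BddAbove ((fun t => |Q₀ t - Qhat t|) '' Set.Icc τs τe) := ⟨ε, hub⟩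
  have hdle : supDist τs τe Q₀ Qhat ≤ ε :=
    csSup_le ((Set.nonempty_Icc.mpr hτse.le).image _) hub
  have hdpos : 0 < supDist τs τe Q₀ Qhat := by
    set t₀ : ℝ := τs / 2 with ht₀def
    have ht₀ : t₀ ∈ Set.Ioo τs τe := by
      constructor
      · rw [ht₀def]; linarith
      · rw [ht₀def]; linarith
    have ht₀Icc : t₀ ∈ Set.Icc τs τe := ⟨ht₀.1.le, ht₀.2.le⟩
    have h1 : 0 < δ * Qhat t₀ := mul_pos hδpos (hHpos t₀ ht₀)
    have h2 : δ * Qhat t₀ ≤ supDist τs τe Q₀ Qhat := by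
      rw [← habs t₀ ht₀Icc]
      exact le_csSup hbdd ⟨t₀, ht₀Icc, rfl⟩
    linarith
  refine ⟨Q₀, hQ₀mem, hdpos, hdle, ?_⟩
  have hiter : ∀ k : ℕ, Y^[k] Q₀ ∈ QSpace τs τe ∧
      supDist τs τe Q₀ Qhat ≤ supDist τs τe (Y^[k] Q₀) Qhat := by
    intro k
    induction k with
    | zero => exact ⟨hQ₀mem, le_refl _⟩
    | succ n ih =>
      rw [Function.iterate_succ_apply']
      exact ⟨hY.1 _ ih.1, ih.2.trans (olp_step τs τe hτs hτe β γ N₁ s Qhat hQhatmem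
        hQhat1 hQhat2 Y hY (Y^[n] Q₀) ih.1)⟩
  exact fun k => (hiter k).2
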